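/- Let X, Y be compact Hausdorff spaces and f : X → Y a continuous surjection. Assume that the topological weight of X is strictly less than 2^ℵ₀, that Y is metrizable and not scattered, and that f is weakly c-tight. Then X has a subset homeomorphic to the Cantor space 2^ω. -/

import Mathlib

open Set Topology

universe u

section Defs

variable {X Y K Z : Type*}

/-- A subset `S` of a topological space is *scattered* iff every nonempty subset `T ⊆ S`
has a point which is isolated in the subspace topology of `T`. -/
def IsScatteredSet [TopologicalSpace X] (S : Set X) : Prop :=
  ∀ T ⊆ S, T.Nonempty → ∃ x ∈ T, ∃ U : Set X, IsOpen U ∧ U ∩ T = {x}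

/-- A *loose family* for `f : X → Y` : a pairwise disjoint family `Ps` of closed subsets of `X`
such that for some non-scattered `Q ⊆ Y`, `f '' P = Q` for all `P ∈ Ps`. -/
def LooseFamily [TopologicalSpace X] [TopologicalSpace Y] (f : X → Y)
    (Ps : Set (Set X)) : Prop :=
  Ps.Pairwise Disjoint ∧ (∀ P ∈ Ps, IsClosed P) ∧
    ∃ Q : Set Y, ¬ IsScatteredSet Q ∧ ∀ P ∈ Ps, f '' P = Q

/-- `f` is `κ`-*tight* iff there is no loose family for `f` of cardinality `κ`. -/
def IsTightCard [TopologicalSpace X] [TopologicalSpace Y] (κ : Cardinal) (f : X → Y) : Prop :=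
  ¬ ∃ Ps : Set (Set X), LooseFamily f Ps ∧ Cardinal.mk Ps = κ

/-- `f` is *tight* iff it is `2`-tight. -/
def IsTight [TopologicalSpace X] [TopologicalSpace Y] (f : X → Y) : Prop :=
  IsTightCard 2 f

/-- A `K`-*loose function* for `f : X → Y` : a continuous `φ : D → K` with `D` closed in `X`,
such that for some non-scattered `Q ⊆ Y`, `φ(f⁻¹{y} ∩ D) = K` for all `y ∈ Q`. -/
def LooseFunction [TopologicalSpace X] [TopologicalSpace Y] [TopologicalSpace K]
    (f : X → Y) (D : Set X) (φ : X → K) : Prop :=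
  IsClosed D ∧ ContinuousOn φ D ∧
    ∃ Q : Set Y, ¬ IsScatteredSet Q ∧ ∀ y ∈ Q, φ '' (f ⁻¹' {y} ∩ D) = Set.univ

/-- `f` is *weakly c-tight* iff there is no `K`-loose function for `f`
with `K` the Cantor space `2^ω`. -/
def WeaklyCTight [TopologicalSpace X] [TopologicalSpace Y] (f : X → Y) : Prop :=
  ¬ ∃ (D : Set X) (φ : X → (ℕ → Bool)), LooseFunction f D φ

/-- `f` is *finer* than `g` iff `f x₁ = f x₂` implies `g x₁ = g x₂`. -/
def Finer (f : X → Y) (g : X → Z) : Prop :=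
  ∀ x₁ x₂ : X, f x₁ = f x₂ → g x₁ = g x₂

end Defs

/-- `X` is `κ`-*dissipated* iff every continuous map from `X` to a compact metrizable
space is refined by a `κ`-tight continuous map from `X` to a compact metrizable space. -/
def IsDissipatedCard (κ : Cardinal.{u}) (X : Type u) [TopologicalSpace X] : Prop :=
  ∀ (Z : Type u) [TopologicalSpace Z] [CompactSpace Z] [TopologicalSpace.MetrizableSpace Z],
    ∀ g : X → Z, Continuous g →
      ∃ (Y : Type u) (tY : TopologicalSpace Y),
        @CompactSpace Y tY ∧ @TopologicalSpace.MetrizableSpace Y tY ∧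
        ∃ f : X → Y, @Continuous X Y _ tY f ∧ @IsTightCard X Y _ tY κ f ∧ Finer f g

/-- `X` is *weakly c-dissipated* iff every continuous map from `X` to a compact metrizable
space is refined by a weakly c-tight continuous map from `X` to a compact metrizable space. -/
def IsWeaklyCDissipated (X : Type u) [TopologicalSpace X] : Prop :=
  ∀ (Z : Type u) [TopologicalSpace Z] [CompactSpace Z] [TopologicalSpace.MetrizableSpace Z],
    ∀ g : X → Z, Continuous g →
      ∃ (Y : Type u) (tY : TopologicalSpace Y),
        @CompactSpace Y tY ∧ @TopologicalSpace.MetrizableSpace Y tY ∧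
        ∃ f : X → Y, @Continuous X Y _ tY f ∧ @WeaklyCTight X Y _ tY f ∧ Finer f g

/-- The topological weight of a space: the least cardinality of a topological basis. -/
noncomputable def topWeight (X : Type u) [TopologicalSpace X] : Cardinal.{u} :=
  sInf {κ : Cardinal.{u} | ∃ B : Set (Set X),
    TopologicalSpace.IsTopologicalBasis B ∧ Cardinal.mk B = κ}


set_option linter.unusedSectionVars false
set_option maxHeartbeats 1000000

section AuxStmt8

open Cardinal TopologicalSpace Function

lemma not_isScatteredSet_of_not_countable {α : Type*} [TopologicalSpace α]
    [SecondCountableTopology α] {Q : Set α} (h : ¬ Q.Countable) : ¬ IsScatteredSet Q := by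
  obtain ⟨b, bct, -, bbasis⟩ := TopologicalSpace.exists_countable_basis α
  intro hsc
  set T : Set α := {x ∈ Q | ∀ U ∈ b, x ∈ U → ¬ (U ∩ Q).Countable} with hT
  have hbig : (⋃ U ∈ {U ∈ b | (U ∩ Q).Countable}, (U ∩ Q)).Countable := by
    refine Set.Countable.biUnion (bct.mono (Set.sep_subset _ _)) ?_
    exact fun U hU => hU.2
  have hTne : T.Nonempty := by
    by_contra hne
    rw [Set.not_nonempty_iff_eq_empty] at hne
    apply h
    refine Set.Countable.mono ?_ hbig
    intro x hxQ
    have hx : x ∉ T := by rw [hne]; exact Set.notMem_empty x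
    rw [hT] at hx
    simp only [Set.mem_setOf_eq, hxQ, true_and, not_forall] at hx
    obtain ⟨U, hUb, hxU, hUc⟩ := hx
    rw [not_not] at hUc
    exact Set.mem_biUnion ⟨hUb, hUc⟩ ⟨hxU, hxQ⟩
  obtain ⟨x, hxT, U, hUo, hUT⟩ := hsc T (fun x hx => hx.1) hTne
  have hxU : x ∈ U ∩ T := hUT.symm ▸ Set.mem_singleton x
  obtain ⟨V, hVb, hxV, hVU⟩ := bbasis.exists_subset_of_mem_open hxU.1 hUo
  refine hxT.2 V hVb hxV ?_
  have hsub : V ∩ Q ⊆ {x} ∪ ⋃ U ∈ {U ∈ b | (U ∩ Q).Countable}, (U ∩ Q) := by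
    rintro z ⟨hzV, hzQ⟩
    by_cases hz : z ∈ T
    · left
      have : z ∈ U ∩ T := ⟨hVU hzV, hz⟩
      rw [hUT] at this
      exact this
    · right
      rw [hT] at hz
      simp only [Set.mem_setOf_eq, hzQ, true_and, not_forall] at hz
      obtain ⟨W, hWb, hzW, hWc⟩ := hz
      rw [not_not] at hWc
      exact Set.mem_biUnion ⟨hWb, hWc⟩ ⟨hzW, hzQ⟩
  exact Set.Countable.mono hsub ((Set.countable_singleton x).union hbig)

lemma exists_perfect_of_not_isScatteredSet {α : Type*} [TopologicalSpace α]
    (h : ¬ IsScatteredSet (Set.univ : Set α)) : ∃ P : Set α, Perfect P ∧ P.Nonempty := by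
  rw [IsScatteredSet] at h
  push_neg at h
  obtain ⟨T, -, hTne, hiso⟩ := h
  refine ⟨closure T, Preperfect.perfect_closure ?_, hTne.closure⟩
  intro x hxT
  rw [accPt_iff_nhds]
  intro U hU
  obtain ⟨O, hOU, hOo, hxO⟩ := mem_nhds_iff.mp hU
  have hne : O ∩ T ≠ {x} := hiso x hxT O hOo
  by_contra hcon
  push_neg at hcon
  apply hne
  apply Set.Subset.antisymm
  · intro y hy
    exact hcon y ⟨hOU hy.1, hy.2⟩
  · exact Set.singleton_subset_iff.mpr ⟨hxO, hxT⟩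


lemma mk_cantor : #(ℕ → Bool) = Cardinal.continuum := by
  rw [Cardinal.mk_arrow]; simp [Cardinal.mk_bool, Cardinal.two_power_aleph0]

lemma not_countable_cantor : ¬ Countable (ℕ → Bool) := by
  intro h
  have h2 := Cardinal.mk_le_aleph0 (α := ℕ → Bool)
  rw [mk_cantor] at h2
  exact Cardinal.aleph0_lt_continuum.not_ge h2

lemma exists_cantor_inj_avoid {α : Type u} [TopologicalSpace α] [CompactSpace α]
    [TopologicalSpace.MetrizableSpace α] {K B : Set α} (hK : Perfect K) (hKne : K.Nonempty)
    (hB : #B < Cardinal.continuum) :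
    ∃ j : (ℕ → Bool) → α, Continuous j ∧ Function.Injective j ∧ range j ⊆ K ∧
      ∀ x, j x ∉ B := by
  letI : MetricSpace α := TopologicalSpace.metrizableSpaceMetric α
  obtain ⟨j0, hj0K, hj0c, hj0i⟩ := hK.exists_nat_bool_injection hKne
  set ha : (ℕ → Bool) → (ℕ → Bool) → ℕ → Bool :=
    fun a x n => if n % 2 = 0 then a (n / 2) else x (n / 2) with hha
  have haEven : ∀ a x k, ha a x (2 * k) = a k := by
    intro a x k
    have h1 : (2 * k) % 2 = 0 := by omega
    have h2 : (2 * k) / 2 = k := by omega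
    simp [hha, h1, h2]
  have haOdd : ∀ a x k, ha a x (2 * k + 1) = x k := by
    intro a x k
    have h1 : ¬ ((2 * k + 1) % 2 = 0) := by omega
    have h2 : (2 * k + 1) / 2 = k := by omega
    simp [hha, h1, h2]
  have hgood : ∃ a, ∀ x, j0 (ha a x) ∉ B := by
    by_contra hcon
    push_neg at hcon
    choose xs hxs using hcon
    have hxs' : ∀ a, j0 (ha a (xs a)) ∈ B := hxs
    have Finj : Function.Injective (fun a => (⟨j0 (ha a (xs a)), hxs' a⟩ : B)) := by
      intro a a' h
      rw [Subtype.mk.injEq] at h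
      have h2 := hj0i h
      funext k
      have := congrFun h2 (2 * k)
      rwa [haEven, haEven] at this
    have hle : Cardinal.lift.{u} #(ℕ → Bool) ≤ Cardinal.lift.{0} #B :=
      Cardinal.lift_mk_le'.mpr ⟨⟨_, Finj⟩⟩
    rw [mk_cantor, Cardinal.lift_continuum, Cardinal.lift_uzero] at hle
    exact hB.not_ge hle
  obtain ⟨a, hafree⟩ := hgood
  refine ⟨fun x => j0 (ha a x), ?_, ?_, ?_, hafree⟩
  · refine hj0c.comp ?_
    refine continuous_pi fun n => ?_
    by_cases h : n % 2 = 0 <;> simp only [hha, h, if_true, if_false]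
    · exact continuous_const
    · exact continuous_apply (n / 2)
  · intro x x' h
    have h2 := hj0i h
    funext k
    have := congrFun h2 (2 * k + 1)
    rwa [haOdd, haOdd] at this
  · rintro y ⟨x, rfl⟩
    exact hj0K ⟨ha a x, rfl⟩

lemma exists_basis_sep {X : Type u} [TopologicalSpace X] [CompactSpace X] [T2Space X]
    {B₀ : Set (Set X)} (hb : IsTopologicalBasis B₀) {x x' : X} (hxx : x ≠ x') :
    ∃ U ∈ B₀, ∃ V ∈ B₀, x ∈ U ∧ x' ∈ V ∧ Disjoint (closure U) (closure V) := by
  obtain ⟨W, W', hWo, hW'o, hxW, hx'W', hWW'⟩ := t2_separation hxx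
  obtain ⟨t, htn, htc, htW⟩ := exists_mem_nhds_isClosed_subset (hWo.mem_nhds hxW)
  obtain ⟨t', ht'n, ht'c, ht'W'⟩ := exists_mem_nhds_isClosed_subset (hW'o.mem_nhds hx'W')
  obtain ⟨U, hUb, hxU, hUt⟩ :=
    hb.exists_subset_of_mem_open (mem_interior_iff_mem_nhds.mpr htn) isOpen_interior
  obtain ⟨V, hVb, hx'V, hVt'⟩ :=
    hb.exists_subset_of_mem_open (mem_interior_iff_mem_nhds.mpr ht'n) isOpen_interior
  refine ⟨U, hUb, V, hVb, hxU, hx'V, ?_⟩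
  have h1 : closure U ⊆ W := (closure_minimal (hUt.trans interior_subset) htc).trans htW
  have h2 : closure V ⊆ W' := (closure_minimal (hVt'.trans interior_subset) ht'c).trans ht'W'
  exact hWW'.mono h1 h2

variable {X Y : Type u}
  [TopologicalSpace X] [CompactSpace X] [T2Space X]
  [TopologicalSpace Y] [CompactSpace Y] [TopologicalSpace.MetrizableSpace Y]

lemma split_or_cantor (f : X → Y) (hf : Continuous f) {B₀ : Set (Set X)}
    (hbasis : IsTopologicalBasis B₀) (hcard : #B₀ < Cardinal.continuum)
    {D : Set X} (hD : IsClosed D) {K : Set Y} (hK : Perfect K) (hKne : K.Nonempty)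
    (hKD : K ⊆ f '' D) :
    (∃ D₀ D₁ : Set X, IsClosed D₀ ∧ IsClosed D₁ ∧ D₀ ⊆ D ∧ D₁ ⊆ D ∧ Disjoint D₀ D₁ ∧
      ∃ P : Set Y, Perfect P ∧ P.Nonempty ∧ P ⊆ K ∧ P ⊆ f '' D₀ ∧ P ⊆ f '' D₁) ∨
    (∃ ψ : (ℕ → Bool) → X, Continuous ψ ∧ Function.Injective ψ) := by
  classical
  set I := {p : Set X × Set X // p.1 ∈ B₀ ∧ p.2 ∈ B₀ ∧ Disjoint (closure p.1) (closure p.2)}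
    with hI
  set N : I → Set Y := fun p =>
    (f '' (D ∩ closure p.1.1)) ∩ (f '' (D ∩ closure p.1.2)) ∩ K with hN
  have hNclosed : ∀ p : I, IsClosed (N p) := by
    intro p
    have h1 : IsCompact (D ∩ closure p.1.1) := (hD.inter isClosed_closure).isCompact
    have h2 : IsCompact (D ∩ closure p.1.2) := (hD.inter isClosed_closure).isCompact
    exact (((h1.image hf).isClosed.inter (h2.image hf).isClosed)).inter hK.closed
  by_cases hcase : ∃ p : I, ¬ (N p).Countable
  · left
    obtain ⟨p, hp⟩ := hcase
    obtain ⟨P, hP, hPne, hPN⟩ :=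
      exists_perfect_nonempty_of_isClosed_of_not_countable (hNclosed p) hp
    refine ⟨D ∩ closure p.1.1, D ∩ closure p.1.2,
      hD.inter isClosed_closure, hD.inter isClosed_closure,
      inter_subset_left, inter_subset_left, ?_, P, hP, hPne, ?_, ?_, ?_⟩
    · exact (p.2.2.2.mono inter_subset_right inter_subset_right)
    · exact fun y hy => ((hPN hy).2)
    · exact fun y hy => ((hPN hy).1.1)
    · exact fun y hy => ((hPN hy).1.2)
  · right
    push_neg at hcase
    set Bad : Set Y := ⋃ p : I, N p with hBad
    have hIsmall : #I < Cardinal.continuum := by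
      have hinj : Function.Injective (fun p : I => ((⟨p.1.1, p.2.1⟩ : B₀), (⟨p.1.2, p.2.2.1⟩ : B₀))) := by
        rintro ⟨⟨U, V⟩, h⟩ ⟨⟨U', V'⟩, h'⟩ hp
        simp only [Prod.mk.injEq, Subtype.mk.injEq] at hp
        simp [Subtype.mk.injEq, Prod.mk.injEq, hp.1, hp.2]
      calc #I ≤ #(B₀ × B₀) := Cardinal.mk_le_of_injective hinj
        _ < Cardinal.continuum := by
          rw [Cardinal.mk_prod, Cardinal.lift_id]
          exact Cardinal.mul_lt_of_lt Cardinal.aleph0_le_continuum hcard hcard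
    have hBadsmall : #Bad < Cardinal.continuum := by
      rcases isEmpty_or_nonempty I with hI0 | hI0
      · have : Bad = ∅ := by simp [hBad]
        rw [this]
        simp only [Cardinal.mk_emptyCollection]
        exact Cardinal.continuum_pos
      · calc #Bad ≤ #I * ⨆ p : I, #(N p) := Cardinal.mk_iUnion_le N
          _ ≤ #I * Cardinal.aleph0 := by
            refine mul_le_mul_right ?_ _
            refine ciSup_le' fun p => ?_
            rw [Cardinal.mk_le_aleph0_iff]
            exact (hcase p).to_subtype
          _ < Cardinal.continuum :=
            Cardinal.mul_lt_of_lt Cardinal.aleph0_le_continuum hIsmall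
              Cardinal.aleph0_lt_continuum
    obtain ⟨j, hjc, hji, hjK, hjB⟩ := exists_cantor_inj_avoid hK hKne hBadsmall
    -- fibers over points of range j meet D in exactly one point
    have huniq : ∀ σ, ∀ x ∈ f ⁻¹' {j σ} ∩ D, ∀ x' ∈ f ⁻¹' {j σ} ∩ D, x = x' := by
      intro σ x hx x' hx'
      by_contra hne
      obtain ⟨U, hUb, V, hVb, hxU, hx'V, hUV⟩ := exists_basis_sep hbasis hne
      have : j σ ∈ Bad := by
        refine Set.mem_iUnion.mpr ⟨⟨(U, V), hUb, hVb, hUV⟩, ?_⟩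
        refine ⟨⟨⟨x, ⟨hx.2, subset_closure hxU⟩, hx.1⟩,
                ⟨x', ⟨hx'.2, subset_closure hx'V⟩, hx'.1⟩⟩, hjK ⟨σ, rfl⟩⟩
      exact hjB σ this
    have hfib : ∀ σ : ℕ → Bool, ∃ x, x ∈ f ⁻¹' {j σ} ∩ D := by
      intro σ
      obtain ⟨x, hxD, hfx⟩ := hKD (hjK ⟨σ, rfl⟩)
      exact ⟨x, by simp [hfx], hxD⟩
    choose ψ hψ using hfib
    have hfψ : ∀ σ, f (ψ σ) = j σ := fun σ => (hψ σ).1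
    refine ⟨ψ, ?_, ?_⟩
    · rw [continuous_iff_continuousAt]
      intro σ
      rw [ContinuousAt, tendsto_nhds]
      intro U hUo hψU
      have hE : IsClosed (f '' (D ∩ Uᶜ)) :=
        ((hD.inter (isClosed_compl_iff.mpr hUo)).isCompact.image hf).isClosed
      have hjE : j σ ∉ f '' (D ∩ Uᶜ) := by
        rintro ⟨x'', ⟨hx''D, hx''U⟩, hfx''⟩
        have : x'' = ψ σ := huniq σ x'' ⟨by simp [hfx''], hx''D⟩ (ψ σ) (hψ σ)
        exact hx''U (this ▸ hψU)
      have hW : IsOpen (j ⁻¹' (f '' (D ∩ Uᶜ))ᶜ) := (hE.isOpen_compl).preimage hjc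
      refine Filter.mem_of_superset (hW.mem_nhds hjE) ?_
      intro τ hτ
      by_contra hτU
      exact hτ ⟨ψ τ, ⟨(hψ τ).2, hτU⟩, hfψ τ⟩
    · intro σ τ h
      apply hji
      rw [← hfψ σ, ← hfψ τ, h]

/-- Splitting hypothesis: every closed set whose image contains a nonempty perfect set
splits into two disjoint closed subsets whose images share a nonempty perfect subset. -/
def SplitHyp (f : X → Y) : Prop :=
  ∀ D : Set X, IsClosed D → ∀ K : Set Y, Perfect K → K.Nonempty → K ⊆ f '' D →
    ∃ D₀ D₁ : Set X, IsClosed D₀ ∧ IsClosed D₁ ∧ D₀ ⊆ D ∧ D₁ ⊆ D ∧ Disjoint D₀ D₁ ∧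
      ∃ P, Perfect P ∧ P.Nonempty ∧ P ⊆ K ∧ P ⊆ f '' D₀ ∧ P ⊆ f '' D₁

lemma refine_one {f : X → Y} (hf : Continuous f) (hsp : SplitHyp f)
    {D : Set X} (hD : IsClosed D) :
    ∀ (m : ℕ) (K : Fin m → Set Y), (∀ j, Perfect (K j)) → (∀ j, (K j).Nonempty) →
    (∀ j, K j ⊆ f '' D) → (∀ j j', j ≠ j' → Disjoint (K j) (K j')) →
    ∃ (A : Bool → Set X) (K' : Fin m → Set Y),
      (∀ b, IsClosed (A b)) ∧ (∀ b, A b ⊆ D) ∧ Disjoint (A false) (A true) ∧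
      (∀ j, Perfect (K' j)) ∧ (∀ j, (K' j).Nonempty) ∧ (∀ j, K' j ⊆ K j) ∧
      (∀ j b, K' j ⊆ f '' (A b)) := by
  intro m
  induction m with
  | zero =>
    intro K _ _ _ _
    exact ⟨fun _ => ∅, K, fun _ => isClosed_empty, fun _ => empty_subset D,
      disjoint_bot_left, fun j => j.elim0, fun j => j.elim0,
      fun j => j.elim0, fun j => j.elim0⟩
  | succ m ih =>
    intro K hKp hKne hKD hKd
    obtain ⟨A, K', hAc, hAD, hAd, hK'p, hK'ne, hK'K, hK'A⟩ :=
      ih (fun j => K j.castSucc) (fun j => hKp _) (fun j => hKne _) (fun j => hKD _)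
        (fun j j' hjj => hKd _ _ (fun h => hjj (Fin.castSucc_injective m h)))
    obtain ⟨D₀, D₁, hD₀c, hD₁c, hD₀D, hD₁D, hDd, P, hPp, hPne, hPK, hPD₀, hPD₁⟩ :=
      hsp D hD (K (Fin.last m)) (hKp _) (hKne _) (hKD _)
    have hUc : IsClosed (⋃ j, K' j) := isClosed_iUnion_of_finite fun j => (hK'p j).closed
    have hPdisj : Disjoint (⋃ j, K' j) P := by
      rw [Set.disjoint_left]
      rintro y hy hyP
      obtain ⟨j, hyj⟩ := Set.mem_iUnion.mp hy
      exact Set.disjoint_left.mp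
        (hKd j.castSucc (Fin.last m) (Fin.castSucc_lt_last j).ne)
        (hK'K j hyj) (hPK hyP)
    set A' : Bool → Set X := fun b =>
      (A b ∩ f ⁻¹' (⋃ j, K' j)) ∪ ((bif b then D₁ else D₀) ∩ f ⁻¹' P) with hA'
    refine ⟨A', Fin.snoc K' P, ?_, ?_, ?_, ?_, ?_, ?_, ?_⟩
    · intro b
      refine ((hAc b).inter (hUc.preimage hf)).union (IsClosed.inter ?_ (hPp.closed.preimage hf))
      cases b
      · exact hD₀c
      · exact hD₁c
    · intro b
      refine Set.union_subset ((inter_subset_left).trans (hAD b)) ?_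
      cases b
      · exact (inter_subset_left).trans hD₀D
      · exact (inter_subset_left).trans hD₁D
    · simp only [hA', Bool.cond_false, Bool.cond_true]
      refine Set.disjoint_union_left.mpr ⟨?_, ?_⟩ <;>
        refine Set.disjoint_union_right.mpr ⟨?_, ?_⟩
      · exact hAd.mono inter_subset_left inter_subset_left
      · exact ((hPdisj.preimage f).mono inter_subset_right inter_subset_right)
      · exact (((hPdisj.symm).preimage f).mono inter_subset_right inter_subset_right)
      · exact hDd.mono inter_subset_left inter_subset_left
    · intro j
      refine Fin.lastCases ?_ ?_ j
      · rw [Fin.snoc_last]; exact hPp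
      · intro i; rw [Fin.snoc_castSucc]; exact hK'p i
    · intro j
      refine Fin.lastCases ?_ ?_ j
      · rw [Fin.snoc_last]; exact hPne
      · intro i; rw [Fin.snoc_castSucc]; exact hK'ne i
    · intro j
      refine Fin.lastCases ?_ ?_ j
      · rw [Fin.snoc_last]; exact hPK
      · intro i; rw [Fin.snoc_castSucc]; exact hK'K i
    · intro j b
      refine Fin.lastCases ?_ ?_ j
      · rw [Fin.snoc_last]
        intro y hy
        have : P ⊆ f '' (bif b then D₁ else D₀) := by cases b; exacts [hPD₀, hPD₁]
        obtain ⟨x, hxD, hfx⟩ := this hy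
        exact ⟨x, Or.inr ⟨hxD, by simp [hfx, hy]⟩, hfx⟩
      · intro i
        rw [Fin.snoc_castSucc]
        intro y hy
        obtain ⟨x, hxA, hfx⟩ := hK'A i b hy
        refine ⟨x, Or.inl ⟨hxA, ?_⟩, hfx⟩
        simp only [Set.mem_preimage, hfx]
        exact Set.mem_iUnion.mpr ⟨i, hy⟩
lemma refine_many {f : X → Y} (hf : Continuous f) (hsp : SplitHyp f) :
    ∀ (r : ℕ) (Dv : Fin r → Set X), (∀ i, IsClosed (Dv i)) →
    ∀ (m : ℕ) (K : Fin m → Set Y), (∀ j, Perfect (K j)) → (∀ j, (K j).Nonempty) →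
    (∀ i j, K j ⊆ f '' (Dv i)) → (∀ j j', j ≠ j' → Disjoint (K j) (K j')) →
    ∃ (A : Fin r → Bool → Set X) (K' : Fin m → Set Y),
      (∀ i b, IsClosed (A i b)) ∧ (∀ i b, A i b ⊆ Dv i) ∧
      (∀ i, Disjoint (A i false) (A i true)) ∧
      (∀ j, Perfect (K' j)) ∧ (∀ j, (K' j).Nonempty) ∧ (∀ j, K' j ⊆ K j) ∧
      (∀ i b j, K' j ⊆ f '' (A i b)) := by
  intro r
  induction r with
  | zero =>
    intro Dv _ m K hKp hKne _ _
    exact ⟨fun i => i.elim0, K, fun i => i.elim0, fun i => i.elim0, fun i => i.elim0,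
      hKp, hKne, fun j => subset_rfl, fun i => i.elim0⟩
  | succ r ih =>
    intro Dv hDv m K hKp hKne hKD hKd
    obtain ⟨A, K', hAc, hAD, hAd, hK'p, hK'ne, hK'K, hK'A⟩ :=
      ih (fun i => Dv i.castSucc) (fun i => hDv _) m K hKp hKne (fun i j => hKD _ j) hKd
    obtain ⟨Al, K'', hAlc, hAlD, hAld, hK''p, hK''ne, hK''K, hK''A⟩ :=
      refine_one hf hsp (hDv (Fin.last r)) m K' hK'p hK'ne
        (fun j => (hK'K j).trans (hKD (Fin.last r) j))
        (fun j j' hjj => (hKd j j' hjj).mono (hK'K j) (hK'K j'))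
    refine ⟨Fin.snoc A Al, K'', ?_, ?_, ?_, hK''p, hK''ne,
      fun j => (hK''K j).trans (hK'K j), ?_⟩
    · intro i b
      refine Fin.lastCases ?_ ?_ i
      · rw [Fin.snoc_last]; exact hAlc b
      · intro i'; rw [Fin.snoc_castSucc]; exact hAc i' b
    · intro i b
      refine Fin.lastCases ?_ ?_ i
      · rw [Fin.snoc_last]; exact hAlD b
      · intro i'; rw [Fin.snoc_castSucc]; exact hAD i' b
    · intro i
      refine Fin.lastCases ?_ ?_ i
      · rw [Fin.snoc_last]; exact hAld
      · intro i'; rw [Fin.snoc_castSucc]; exact hAd i'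
    · intro i b j
      refine Fin.lastCases ?_ ?_ i
      · rw [Fin.snoc_last]; exact hK''A j b
      · intro i'; rw [Fin.snoc_castSucc]
        exact (hK''K j).trans (hK'A i' b j)

def GoodT (f : X → Y) (n : ℕ) (Dl : (Fin n → Bool) → Set X)
    (Kl : (Fin n → Bool) → Set Y) : Prop :=
  (∀ s, IsClosed (Dl s)) ∧ (∀ s t, s ≠ t → Disjoint (Dl s) (Dl t)) ∧
  (∀ s, Perfect (Kl s)) ∧ (∀ s, (Kl s).Nonempty) ∧
  (∀ s t, s ≠ t → Disjoint (Kl s) (Kl t)) ∧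
  (∀ s t, Kl t ⊆ f '' (Dl s))

lemma step_exists {f : X → Y} (hf : Continuous f) (hsp : SplitHyp f) (n : ℕ)
    (Dl : (Fin n → Bool) → Set X) (Kl : (Fin n → Bool) → Set Y)
    (hg : GoodT f n Dl Kl) :
    ∃ (Dl' : (Fin (n+1) → Bool) → Set X) (Kl' : (Fin (n+1) → Bool) → Set Y),
      GoodT f (n+1) Dl' Kl' ∧
      ∀ (s : Fin n → Bool) (b : Bool),
        Dl' (Fin.snoc s b) ⊆ Dl s ∧ Kl' (Fin.snoc s b) ⊆ Kl s := by
  classical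
  obtain ⟨hDc, hDd, hKp, hKne, hKd, hsub⟩ := hg
  letI : MetricSpace Y := TopologicalSpace.metrizableSpaceMetric Y
  -- phase 1: split each piece in two
  have hsplitK : ∀ s : Fin n → Bool, ∃ C : Bool → Set Y,
      (∀ b, Perfect (C b) ∧ (C b).Nonempty ∧ C b ⊆ Kl s) ∧ Disjoint (C false) (C true) := by
    intro s
    obtain ⟨C₀, C₁, h₀, h₁, hd⟩ := (hKp s).splitting (hKne s)
    exact ⟨fun b => bif b then C₁ else C₀, by
      intro b; cases b
      · exact ⟨h₀.1, h₀.2.1, h₀.2.2⟩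
      · exact ⟨h₁.1, h₁.2.1, h₁.2.2⟩, hd⟩
  choose C hC hCd using hsplitK
  set pc : ((Fin n → Bool) × Bool) → Set Y := fun q => C q.1 q.2 with hpc
  have hpcd : ∀ q q' : (Fin n → Bool) × Bool, q ≠ q' → Disjoint (pc q) (pc q') := by
    rintro ⟨s, b⟩ ⟨s', b'⟩ hq
    by_cases hss : s = s'
    · subst hss
      have hbb : b ≠ b' := fun h => hq (by rw [h])
      have := hCd s
      cases b <;> cases b'
      · exact absurd rfl hbb
      · exact this.mono le_rfl le_rfl
      · exact this.symm.mono le_rfl le_rfl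
      · exact absurd rfl hbb
    · exact (hKd s s' hss).mono (hC s b).2.2 (hC s' b').2.2
  -- index equivs
  let eD := Fintype.equivFin (Fin n → Bool)
  let eP := Fintype.equivFin ((Fin n → Bool) × Bool)
  obtain ⟨A, K', hAc, hAD, hAd, hK'p, hK'ne, hK'K, hK'A⟩ :=
    refine_many hf hsp (Fintype.card (Fin n → Bool)) (fun i => Dl (eD.symm i))
      (fun i => hDc _) (Fintype.card ((Fin n → Bool) × Bool)) (fun j => pc (eP.symm j))
      (fun j => (hC _ _).1) (fun j => (hC _ _).2.1)
      (fun i j => ((hC _ _).2.2).trans (hsub _ _))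
      (fun j j' hjj => hpcd _ _ (fun h => hjj (eP.symm.injective h)))
  refine ⟨fun s => A (eD (Fin.init s)) (s (Fin.last n)),
    fun s => K' (eP (Fin.init s, s (Fin.last n))), ⟨?_, ?_, ?_, ?_, ?_, ?_⟩, ?_⟩
  · intro s; exact hAc _ _
  · intro s t hst
    by_cases hi : Fin.init s = Fin.init t
    · have hbt : s (Fin.last n) ≠ t (Fin.last n) := by
        intro hb
        apply hst
        rw [← Fin.snoc_init_self s, ← Fin.snoc_init_self t, hi, hb]
      have hgen : ∀ i (b b' : Bool), b ≠ b' → Disjoint (A i b) (A i b') := by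
        intro i b b' hbb
        cases b <;> cases b'
        · exact absurd rfl hbb
        · exact hAd _
        · exact (hAd _).symm
        · exact absurd rfl hbb
      show Disjoint (A (eD (Fin.init s)) (s (Fin.last n))) (A (eD (Fin.init t)) (t (Fin.last n)))
      rw [hi]
      exact hgen _ _ _ hbt
    · have h1 : A (eD (Fin.init s)) (s (Fin.last n)) ⊆ Dl (Fin.init s) := by
        have := hAD (eD (Fin.init s)) (s (Fin.last n))
        rwa [eD.symm_apply_apply] at this
      have h2 : A (eD (Fin.init t)) (t (Fin.last n)) ⊆ Dl (Fin.init t) := by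
        have := hAD (eD (Fin.init t)) (t (Fin.last n))
        rwa [eD.symm_apply_apply] at this
      exact (hDd _ _ hi).mono h1 h2
  · intro s; exact hK'p _
  · intro s; exact hK'ne _
  · intro s t hst
    have h1 : K' (eP (Fin.init s, s (Fin.last n))) ⊆ pc (Fin.init s, s (Fin.last n)) := by
      have := hK'K (eP (Fin.init s, s (Fin.last n)))
      rwa [eP.symm_apply_apply] at this
    have h2 : K' (eP (Fin.init t, t (Fin.last n))) ⊆ pc (Fin.init t, t (Fin.last n)) := by
      have := hK'K (eP (Fin.init t, t (Fin.last n)))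
      rwa [eP.symm_apply_apply] at this
    refine (hpcd _ _ ?_).mono h1 h2
    intro hq
    apply hst
    have h3 := congrArg Prod.fst hq
    have h4 := congrArg Prod.snd hq
    simp only at h3 h4
    rw [← Fin.snoc_init_self s, ← Fin.snoc_init_self t, h3, h4]
  · intro s t; exact hK'A _ _ _
  · intro s b
    constructor
    · show A (eD (Fin.init (Fin.snoc s b : Fin (n+1) → Bool)))
          ((Fin.snoc s b : Fin (n+1) → Bool) (Fin.last n)) ⊆ Dl s
      rw [Fin.init_snoc, Fin.snoc_last]
      have h1 := hAD (eD s) b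
      rwa [eD.symm_apply_apply] at h1
    · show K' (eP (Fin.init (Fin.snoc s b : Fin (n+1) → Bool),
          (Fin.snoc s b : Fin (n+1) → Bool) (Fin.last n))) ⊆ Kl s
      rw [Fin.init_snoc, Fin.snoc_last]
      have h1 := hK'K (eP (s, b))
      rw [eP.symm_apply_apply] at h1
      exact h1.trans (hC s b).2.2

def TwT (f : X → Y) (n : ℕ) :=
  { p : ((Fin n → Bool) → Set X) × ((Fin n → Bool) → Set Y) // GoodT f n p.1 p.2 }

noncomputable def towerT (f : X → Y) (base : TwT f 0)
    (key : ∀ n, (p : TwT f n) → {q : TwT f (n+1) //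
      ∀ (s : Fin n → Bool) (b : Bool),
        q.1.1 (Fin.snoc s b) ⊆ p.1.1 s ∧ q.1.2 (Fin.snoc s b) ⊆ p.1.2 s}) :
    ∀ n, TwT f n
  | 0 => base
  | n+1 => (key n (towerT f base key n)).1

lemma towerT_link (f : X → Y) (base : TwT f 0)
    (key : ∀ n, (p : TwT f n) → {q : TwT f (n+1) //
      ∀ (s : Fin n → Bool) (b : Bool),
        q.1.1 (Fin.snoc s b) ⊆ p.1.1 s ∧ q.1.2 (Fin.snoc s b) ⊆ p.1.2 s})
    (n : ℕ) (s : Fin n → Bool) (b : Bool) :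
    (towerT f base key (n+1)).1.1 (Fin.snoc s b) ⊆ (towerT f base key n).1.1 s ∧
    (towerT f base key (n+1)).1.2 (Fin.snoc s b) ⊆ (towerT f base key n).1.2 s :=
  (key n (towerT f base key n)).2 s b

end AuxStmt8

/-- If `f : X → Y` is a weakly c-tight continuous surjection of compact Hausdorff spaces,
`w(X) < 2^ℵ₀`, and `Y` is metrizable and not scattered, then `X` contains a copy of the
Cantor space. -/
theorem stmt8 {X Y : Type u}
    [TopologicalSpace X] [CompactSpace X] [T2Space X]
    [TopologicalSpace Y] [CompactSpace Y] [TopologicalSpace.MetrizableSpace Y]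
    (f : X → Y) (hf : Continuous f) (hsurj : Function.Surjective f)
    (hw : topWeight X < Cardinal.continuum)
    (hY : ¬ IsScatteredSet (Set.univ : Set Y))
    (ht : WeaklyCTight f) :
    ∃ S : Set X, Nonempty ((ℕ → Bool) ≃ₜ S) := by
  classical
  by_contra hnc
  have hnoinj : ∀ ψ : (ℕ → Bool) → X, Continuous ψ → Function.Injective ψ → False := by
    intro ψ hc hi
    exact hnc ⟨Set.range ψ, ⟨(hc.isClosedEmbedding hi).toIsEmbedding.toHomeomorph⟩⟩
  obtain ⟨B₀, hB₀, hB₀c⟩ : ∃ B : Set (Set X),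
      TopologicalSpace.IsTopologicalBasis B ∧ Cardinal.mk B < Cardinal.continuum := by
    have hne : {κ : Cardinal.{u} | ∃ B : Set (Set X),
        TopologicalSpace.IsTopologicalBasis B ∧ Cardinal.mk B = κ}.Nonempty :=
      ⟨_, {U : Set X | IsOpen U}, TopologicalSpace.isTopologicalBasis_opens, rfl⟩
    obtain ⟨B, hB, hBc⟩ := csInf_mem hne
    exact ⟨B, hB, by rw [hBc]; exact hw⟩
  have hsp : SplitHyp f := by
    intro D hD K hK hKne hKD
    rcases split_or_cantor f hf hB₀ hB₀c hD hK hKne hKD with h | ⟨ψ, hc, hi⟩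
    · exact h
    · exact absurd hi (fun hi => hnoinj ψ hc hi)
  obtain ⟨P₀, hP₀p, hP₀ne⟩ := exists_perfect_of_not_isScatteredSet hY
  have hbase : GoodT f 0 (fun _ => (Set.univ : Set X)) (fun _ => P₀) := by
    refine ⟨fun _ => isClosed_univ, ?_, fun _ => hP₀p, fun _ => hP₀ne, ?_, ?_⟩
    · intro s t hst; exact absurd (funext fun i => i.elim0) hst
    · intro s t hst; exact absurd (funext fun i => i.elim0) hst
    · intro s t
      rw [Set.image_univ, hsurj.range_eq]
      exact Set.subset_univ _
  have hkey : ∀ n, (p : TwT f n) → {q : TwT f (n+1) //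
      ∀ (s : Fin n → Bool) (b : Bool),
        q.1.1 (Fin.snoc s b) ⊆ p.1.1 s ∧ q.1.2 (Fin.snoc s b) ⊆ p.1.2 s} := by
    intro n p
    have h := step_exists hf hsp n p.1.1 p.1.2 p.2
    exact ⟨⟨⟨h.choose, h.choose_spec.choose⟩, h.choose_spec.choose_spec.1⟩,
      h.choose_spec.choose_spec.2⟩
  set T := towerT f ⟨⟨fun _ => Set.univ, fun _ => P₀⟩, hbase⟩ hkey with hTdef
  set Dl : ∀ n, (Fin n → Bool) → Set X := fun n => (T n).1.1 with hDldef
  set Kl : ∀ n, (Fin n → Bool) → Set Y := fun n => (T n).1.2 with hKldef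
  have hgood : ∀ n, GoodT f n (Dl n) (Kl n) := fun n => (T n).2
  have hlink : ∀ n (s : Fin n → Bool) (b : Bool),
      Dl (n+1) (Fin.snoc s b) ⊆ Dl n s ∧ Kl (n+1) (Fin.snoc s b) ⊆ Kl n s :=
    fun n => towerT_link f _ hkey n
  set br : (ℕ → Bool) → ∀ n, Fin n → Bool := fun σ n i => σ i with hbrdef
  have hbrsnoc : ∀ σ n, br σ (n+1) = Fin.snoc (br σ n) (σ n) := by
    intro σ n
    funext i
    refine Fin.lastCases ?_ ?_ i
    · rw [Fin.snoc_last]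
      rfl
    · intro i
      rw [Fin.snoc_castSucc]
      rfl
  have hDdec : ∀ σ n, Dl (n+1) (br σ (n+1)) ⊆ Dl n (br σ n) := by
    intro σ n; rw [hbrsnoc]; exact (hlink n _ _).1
  have hKdec : ∀ σ n, Kl (n+1) (br σ (n+1)) ⊆ Kl n (br σ n) := by
    intro σ n; rw [hbrsnoc]; exact (hlink n _ _).2
  set Dbig : Set X := ⋂ n, ⋃ s : Fin n → Bool, Dl n s with hDbigdef
  set Q : Set Y := ⋂ n, ⋃ s : Fin n → Bool, Kl n s with hQdef
  have hDlevelclosed : ∀ n, IsClosed (⋃ s : Fin n → Bool, Dl n s) :=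
    fun n => isClosed_iUnion_of_finite (fun s => (hgood n).1 s)
  have hDbigclosed : IsClosed Dbig := isClosed_iInter hDlevelclosed
  set U : ℕ → Set X := fun k =>
    ⋃ s : Fin (k+1) → Bool, ⋃ (_ : s (Fin.last k) = true), Dl (k+1) s with hUdef
  set U' : ℕ → Set X := fun k =>
    ⋃ s : Fin (k+1) → Bool, ⋃ (_ : s (Fin.last k) = false), Dl (k+1) s with hU'def
  have hUclosed : ∀ k, IsClosed (U k) := fun k =>
    isClosed_iUnion_of_finite (fun s => isClosed_iUnion_of_finite fun _ => (hgood (k+1)).1 s)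
  have hU'closed : ∀ k, IsClosed (U' k) := fun k =>
    isClosed_iUnion_of_finite (fun s => isClosed_iUnion_of_finite fun _ => (hgood (k+1)).1 s)
  have hcover : ∀ k, ∀ x ∈ Dbig, x ∈ U k ∨ x ∈ U' k := by
    intro k x hx
    have hx2 := Set.mem_iInter.mp hx (k+1)
    obtain ⟨s, hxs⟩ := Set.mem_iUnion.mp hx2
    rcases Bool.eq_false_or_eq_true (s (Fin.last k)) with hb | hb
    · left; exact Set.mem_iUnion.mpr ⟨s, Set.mem_iUnion.mpr ⟨hb, hxs⟩⟩
    · right; exact Set.mem_iUnion.mpr ⟨s, Set.mem_iUnion.mpr ⟨hb, hxs⟩⟩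
  have hdisjU : ∀ k x, x ∈ U k → x ∈ U' k → False := by
    intro k x hxU hxU'
    obtain ⟨s, hs⟩ := Set.mem_iUnion.mp hxU
    obtain ⟨hst, hxs⟩ := Set.mem_iUnion.mp hs
    obtain ⟨t, ht⟩ := Set.mem_iUnion.mp hxU'
    obtain ⟨htf, hxt⟩ := Set.mem_iUnion.mp ht
    have hne : s ≠ t := by
      intro h; rw [h] at hst; rw [hst] at htf; exact Bool.noConfusion htf
    exact Set.disjoint_left.mp ((hgood (k+1)).2.1 s t hne) hxs hxt
  set φ : X → (ℕ → Bool) := fun x k => (U k).boolIndicator x with hφdef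
  have hφcont : ContinuousOn φ Dbig := by
    rw [continuousOn_iff_continuous_restrict]
    refine continuous_pi fun k => ?_
    have heq : (fun (x : Dbig) => Dbig.restrict φ x k)
        = Dbig.restrict ((U k).boolIndicator) := rfl
    rw [show (fun (x : Dbig) => Dbig.domRestrict φ x k) = Dbig.domRestrict ((U k).boolIndicator) from heq,
      ← continuousOn_iff_continuous_restrict]
    refine (continuousOn_boolIndicator_iff_isClopen _ _).mpr ?_
    constructor
    · exact (hUclosed k).preimage continuous_subtype_val
    · have hcompl : ((Subtype.val : Dbig → X) ⁻¹' (U k))ᶜ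
          = (Subtype.val : Dbig → X) ⁻¹' (U' k) := by
        ext ⟨x, hx⟩
        simp only [Set.mem_compl_iff, Set.mem_preimage]
        constructor
        · intro h
          rcases hcover k x hx with h1 | h1
          · exact absurd h1 h
          · exact h1
        · intro h1 h2
          exact hdisjU k x h2 h1
      rw [← isClosed_compl_iff, hcompl]
      exact (hU'closed k).preimage continuous_subtype_val
  have hKlevel : ∀ n (s : Fin n → Bool), IsClosed (Kl n s) :=
    fun n s => ((hgood n).2.2.1 s).closed
  have hbranchK : ∀ σ, (⋂ n, Kl n (br σ n)).Nonempty := by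
    intro σ
    refine IsCompact.nonempty_iInter_of_sequence_nonempty_isCompact_isClosed _
      (fun n => hKdec σ n) (fun n => (hgood n).2.2.2.1 _) (hKlevel 0 _).isCompact
      (fun n => hKlevel n _)
  choose yb hyb using hbranchK
  have hybQ : ∀ σ, yb σ ∈ Q := by
    intro σ
    rw [hQdef, Set.mem_iInter]
    intro n
    exact Set.mem_iUnion.mpr ⟨br σ n, Set.mem_iInter.mp (hyb σ) n⟩
  have hybinj : Function.Injective yb := by
    intro σ τ h
    by_contra hne
    have hex : ∃ k, σ k ≠ τ k := by
      by_contra hk; push_neg at hk; exact hne (funext hk)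
    obtain ⟨k, hk⟩ := hex
    have hbrne : br σ (k+1) ≠ br τ (k+1) := by
      intro hbr2
      exact hk (congrFun hbr2 ⟨k, k.lt_succ_self⟩)
    have hd := (hgood (k+1)).2.2.2.2.1 _ _ hbrne
    exact Set.disjoint_left.mp hd (Set.mem_iInter.mp (hyb σ) (k+1))
      (h ▸ Set.mem_iInter.mp (hyb τ) (k+1))
  have hQunc : ¬ Q.Countable := by
    intro hQc
    have hc1 : Countable Q := hQc.to_subtype
    have hinj2 : Function.Injective (fun σ => (⟨yb σ, hybQ σ⟩ : Q)) := by
      intro a b hab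
      exact hybinj (congrArg Subtype.val hab)
    exact not_countable_cantor hinj2.countable
  have hQns : ¬ IsScatteredSet Q := not_isScatteredSet_of_not_countable hQunc
  have honto : ∀ y ∈ Q, φ '' (f ⁻¹' {y} ∩ Dbig) = Set.univ := by
    intro y hy
    rw [Set.eq_univ_iff_forall]
    intro σ
    have hnon : (⋂ n, (f ⁻¹' {y} ∩ Dl n (br σ n))).Nonempty := by
      refine IsCompact.nonempty_iInter_of_sequence_nonempty_isCompact_isClosed _
        (fun n => Set.inter_subset_inter le_rfl (hDdec σ n)) (fun n => ?_)
        (((isClosed_singleton.preimage hf).inter ((hgood 0).1 _)).isCompact)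
        (fun n => (isClosed_singleton.preimage hf).inter ((hgood n).1 _))
      have hyn := Set.mem_iInter.mp hy n
      obtain ⟨t, hyt⟩ := Set.mem_iUnion.mp hyn
      obtain ⟨x, hxD, hfx⟩ := (hgood n).2.2.2.2.2 (br σ n) t hyt
      exact ⟨x, by simp only [Set.mem_inter_iff, Set.mem_preimage,
        Set.mem_singleton_iff]; exact ⟨hfx, hxD⟩⟩
    obtain ⟨x, hx⟩ := hnon
    have hxD : x ∈ Dbig := Set.mem_iInter.mpr fun n =>
      Set.mem_iUnion.mpr ⟨br σ n, (Set.mem_iInter.mp hx n).2⟩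
    have hfx : f x = y := (Set.mem_iInter.mp hx 0).1
    refine ⟨x, ⟨by simp only [Set.mem_preimage, Set.mem_singleton_iff]; exact hfx, hxD⟩, ?_⟩
    funext k
    have hxk : x ∈ Dl (k+1) (br σ (k+1)) := (Set.mem_iInter.mp hx (k+1)).2
    have hbrlast : br σ (k+1) (Fin.last k) = σ k := rfl
    show (U k).boolIndicator x = σ k
    rcases Bool.eq_false_or_eq_true (σ k) with hσk | hσk
    · have hxU : x ∈ U k := Set.mem_iUnion.mpr ⟨br σ (k+1),
        Set.mem_iUnion.mpr ⟨by rw [hbrlast, hσk], hxk⟩⟩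
      rw [hσk]
      exact ((U k).mem_iff_boolIndicator x).mp hxU
    · have hxU : x ∉ U k := by
        intro hxU
        obtain ⟨t, ht⟩ := Set.mem_iUnion.mp hxU
        obtain ⟨htl, hxt⟩ := Set.mem_iUnion.mp ht
        have hne : t ≠ br σ (k+1) := by
          intro he
          rw [he, hbrlast, hσk] at htl
          exact Bool.noConfusion htl
        exact Set.disjoint_left.mp ((hgood (k+1)).2.1 t _ hne) hxt hxk
      rw [hσk]
      exact ((U k).notMem_iff_boolIndicator x).mp hxU
  exact ht ⟨Dbig, φ, hDbigclosed, hφcont, Q, hQns, honto⟩
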